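/- Let Ω be a measurable space, Y a finite set, k ∈ ℕ₊, ℋ a family of measurable functions Ω^k → Y, and ℓ a separated k-ary loss (s(ℓ) > 0 and ℓ(x,y,y) = 0). If ℋ has the k-ary Haussler packing property with function m^HP, then the VCN_k-dimension of ℋ is at most min over ε ∈ (0, min{s(ℓ)·k!/(2k^k), 1}) of ⌊log₂⌊m^HP(ε)⌋ / (1 − h₂(ε·k^k/(s(ℓ)·k!)))⌋; in particular it is finite. -/

import Mathlib

open MeasureTheory Real
open scoped ENNReal symmDiff

/-- Binary entropy function. -/
noncomputable def binEnt (t : ℝ) : ℝ :=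
  t * Real.logb 2 (1 / t) + (1 - t) * Real.logb 2 (1 / (1 - t))

/-- `ℱ` Natarajan-shatters the finite set `A`. -/
def NatShatters {X Y : Type*} [DecidableEq X] (ℱ : Set (X → Y)) (A : Finset X) : Prop :=
  ∃ f₀ f₁ : X → Y, (∀ a ∈ A, f₀ a ≠ f₁ a) ∧
    ∀ U ⊆ A, ∃ g ∈ ℱ, ∀ a ∈ A, g a = if a ∈ U then f₁ a else f₀ a

lemma binEnt_eq (t : ℝ) : binEnt t = Real.binEntropy t / Real.log 2 := by
  rw [binEnt, Real.binEntropy, Real.logb, Real.logb, one_div, one_div]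
  ring

lemma binEnt_lt_one {t : ℝ} (ht : t ≠ 2⁻¹) : binEnt t < 1 := by
  rw [binEnt_eq, div_lt_one (Real.log_pos one_lt_two)]
  exact Real.binEntropy_lt_log_two.2 ht

lemma rpow_binEnt_eq {δ : ℝ} (h0 : 0 < δ) (h1 : δ < 1) (d : ℝ) :
    (2 : ℝ) ^ (d * binEnt δ) = ((1 - δ) ^ d * (δ / (1 - δ)) ^ (δ * d))⁻¹ := by
  have h1δ : 0 < 1 - δ := by linarith
  have hr : 0 < δ / (1 - δ) := div_pos h0 h1δ
  have hL : (0:ℝ) < (2 : ℝ) ^ (d * binEnt δ) := Real.rpow_pos_of_pos two_pos _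
  have hR : (0:ℝ) < ((1 - δ) ^ d * (δ / (1 - δ)) ^ (δ * d))⁻¹ := by
    positivity
  have hlog : Real.log ((2 : ℝ) ^ (d * binEnt δ)) =
      Real.log (((1 - δ) ^ d * (δ / (1 - δ)) ^ (δ * d))⁻¹) := by
    rw [Real.log_rpow two_pos, Real.log_inv,
      Real.log_mul (by positivity) (by positivity),
      Real.log_rpow h1δ, Real.log_rpow hr, Real.log_div (ne_of_gt h0) (ne_of_gt h1δ),
      binEnt_eq, Real.binEntropy, Real.log_inv, Real.log_inv]
    have hl2 : Real.log 2 ≠ 0 := ne_of_gt (Real.log_pos one_lt_two)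
    field_simp
    ring
  calc (2 : ℝ) ^ (d * binEnt δ) = Real.exp (Real.log ((2 : ℝ) ^ (d * binEnt δ))) :=
        (Real.exp_log hL).symm
    _ = Real.exp (Real.log (((1 - δ) ^ d * (δ / (1 - δ)) ^ (δ * d))⁻¹)) := by rw [hlog]
    _ = _ := Real.exp_log hR

lemma sum_choose_le_rpow_binEnt (d m : ℕ) {δ : ℝ} (h0 : 0 < δ) (h2 : δ < 1/2)
    (hm : (m : ℝ) ≤ δ * d) :
    (∑ j ∈ Finset.range (m+1), (d.choose j : ℝ)) ≤ 2 ^ ((d : ℝ) * binEnt δ) := by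
  have h1δ : 0 < 1 - δ := by linarith
  have hr0 : 0 < δ / (1 - δ) := div_pos h0 h1δ
  have hr1 : δ / (1 - δ) ≤ 1 := by
    rw [div_le_one h1δ]; linarith
  have hmd : m ≤ d := by
    by_contra h
    push_neg at h
    have : (d : ℝ) < m := by exact_mod_cast h
    nlinarith [Nat.cast_nonneg (α := ℝ) d]
  set q := 1 - δ with hq
  set c : ℝ := q ^ (d : ℝ) * (δ / q) ^ (δ * d) with hc
  have hcpos : 0 < c := by positivity
  have key : ∀ j ∈ Finset.range (m+1), (d.choose j : ℝ) * c ≤ (d.choose j : ℝ) * (δ ^ j * q ^ (d - j)) := by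
    intro j hj
    rw [Finset.mem_range] at hj
    have hjm : j ≤ m := Nat.lt_succ_iff.mp hj
    have hjd : j ≤ d := le_trans hjm hmd
    have expand : δ ^ j * q ^ (d - j) = q ^ (d : ℝ) * (δ / q) ^ (j : ℝ) := by
      rw [Real.rpow_natCast, div_rpow h0.le h1δ.le, Real.rpow_natCast, Real.rpow_natCast]
      rw [eq_comm, mul_comm, div_mul_eq_mul_div, mul_comm]
      rw [div_eq_iff (by positivity)]
      rw [mul_assoc, ← pow_add]
      rw [Nat.sub_add_cancel hjd]
      ring
    rw [expand]
    have : (δ / q) ^ (δ * d) ≤ (δ / q) ^ (j : ℝ) :=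
      Real.rpow_le_rpow_of_exponent_ge hr0 hr1 (le_trans (by exact_mod_cast hjm) hm)
    have hq' : (0:ℝ) ≤ q ^ (d:ℝ) := (Real.rpow_pos_of_pos h1δ _).le
    have := mul_le_mul_of_nonneg_left this hq'
    nlinarith [Nat.cast_nonneg (α := ℝ) (d.choose j)]
  have sum1 : ∑ j ∈ Finset.range (m+1), (d.choose j : ℝ) * (δ ^ j * q ^ (d - j)) ≤ 1 := by
    have hsub : Finset.range (m+1) ⊆ Finset.range (d+1) := by
      exact Finset.range_subset_range.mpr (by omega)
    have hfull : ∑ j ∈ Finset.range (d+1), (d.choose j : ℝ) * (δ ^ j * q ^ (d - j)) = 1 := by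
      have h1 := add_pow δ q d
      rw [hq] at h1
      simp only [add_sub_cancel, one_pow] at h1
      have h2' : ∑ j ∈ Finset.range (d+1), (d.choose j:ℝ) * (δ^j * q^(d-j))
          = ∑ j ∈ Finset.range (d+1), δ^j * q^(d-j) * (d.choose j) :=
        Finset.sum_congr rfl fun j _ => by ring
      rw [h2', ← h1]
    rw [← hfull]
    refine Finset.sum_le_sum_of_subset_of_nonneg hsub fun j _ _ => by positivity
  have : (∑ j ∈ Finset.range (m+1), (d.choose j : ℝ)) * c ≤ 1 := by
    rw [Finset.sum_mul]
    exact le_trans (Finset.sum_le_sum key) sum1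
  rw [rpow_binEnt_eq h0 (by linarith) (d : ℝ), ← hq, ← hc]
  have h3 : (∑ j ∈ Finset.range (m+1), (d.choose j : ℝ)) ≤ 1 / c :=
    (le_div_iff₀ hcpos).mpr this
  rwa [one_div] at h3

lemma pi_map_comp {k : ℕ} {α β : Type*} [MeasurableSpace α] [MeasurableSpace β]
    (ν : Measure α) [IsProbabilityMeasure ν] (e : α → β) (he : Measurable e) :
    (Measure.pi fun _ : Fin k => ν.map e)
      = (Measure.pi fun _ : Fin k => ν).map (fun z i => e (z i)) := by
  haveI : IsProbabilityMeasure (ν.map e) := Measure.isProbabilityMeasure_map he.aemeasurable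
  refine (Measure.pi_eq (μ := fun _ : Fin k => ν.map e)
    (μ' := (Measure.pi fun _ : Fin k => ν).map (fun z i => e (z i))) fun A hA => ?_)
  have hE : Measurable (fun (z : Fin k → α) i => e (z i)) :=
    measurable_pi_lambda _ fun i => he.comp (measurable_pi_apply i)
  rw [Measure.map_apply hE (MeasurableSet.univ_pi hA)]
  have hpre : (fun (z : Fin k → α) i => e (z i)) ⁻¹' (Set.pi Set.univ A)
      = Set.pi Set.univ fun i => e ⁻¹' (A i) := by
    ext z; simp [Set.mem_pi]
  rw [hpre, Measure.pi_pi]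
  exact Finset.prod_congr rfl fun i _ => (Measure.map_apply he (hA i)).symm


set_option maxHeartbeats 1000000 in
/-- The `k`-ary Haussler packing property (for a separated loss) implies finiteness of the
`VCN_k`-dimension, with the explicit entropy bound. -/
theorem stmt15 {Ω Y : Type*} [MeasurableSpace Ω] [DecidableEq Ω] [Fintype Y]
    [MeasurableSpace Y] [MeasurableSingletonClass Y] (k : ℕ) (hk : 0 < k)
    (ℋ : Set ((Fin k → Ω) → Y)) (hℋmeas : ∀ H ∈ ℋ, Measurable H)
    (ℓ : (Fin k → Ω) → (Equiv.Perm (Fin k) → Y) → (Equiv.Perm (Fin k) → Y) → ℝ)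
    (hnn : ∀ x y y', 0 ≤ ℓ x y y')
    -- `ℓ` is separated with separation constant `s`
    (s : ℝ) (hs : 0 < s) (hsep : ∀ x y y', y ≠ y' → s ≤ ℓ x y y')
    (hrefl : ∀ x y, ℓ x y y = 0)
    -- total losses are well defined
    (hint : ∀ μ : Measure Ω, IsProbabilityMeasure μ →
      ∀ F G : (Fin k → Ω) → Y, Measurable F → Measurable G →
        Integrable (fun z => ℓ z (fun σ => G (fun i => z (σ i))) (fun σ => F (fun i => z (σ i))))
          (Measure.pi fun _ : Fin k => μ))
    -- `ℋ` has the `k`-ary Haussler packing property with function `mHP`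
    (mHP : ℝ → ℝ)
    (hHP : ∀ ε : ℝ, 0 < ε → ε < 1 → ∀ μ : Measure Ω, IsProbabilityMeasure μ →
      ∃ ℋ' : Finset ((Fin k → Ω) → Y), ↑ℋ' ⊆ ℋ ∧ (ℋ'.card : ℝ) ≤ mHP ε ∧
        ∀ F ∈ ℋ, ∃ H ∈ ℋ',
          (∫ z, ℓ z (fun σ => H (fun i => z (σ i))) (fun σ => F (fun i => z (σ i)))
              ∂(Measure.pi fun _ : Fin k => μ)) ≤ ε) :
    -- conclusion: bound on the `VCN_k`-dimension
    ∀ x : Fin (k - 1) → Ω, ∀ V : Finset Ω,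
      NatShatters
        {g : Ω → (Equiv.Perm (Fin k) → Y) | ∃ H ∈ ℋ, g = fun t σ =>
          H (fun i => if h : ((σ i : ℕ)) < k - 1 then x ⟨(σ i : ℕ), h⟩ else t)} V →
      ∀ ε : ℝ, 0 < ε → ε < min (s * k.factorial / (2 * (k : ℝ) ^ k)) 1 →
        (V.card : ℤ) ≤
          ⌊Real.logb 2 (⌊mHP ε⌋₊ : ℝ) /
            (1 - binEnt (ε * (k : ℝ) ^ k / (s * k.factorial)))⌋ := by
  classical
  intro x V hshatter ε hε0 hεlt
  obtain ⟨f₀, f₁, hf01, hUex⟩ := hshatter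
  have hεs : ε < s * k.factorial / (2 * (k : ℝ) ^ k) := (lt_min_iff.mp hεlt).1
  have hε1 : ε < 1 := (lt_min_iff.mp hεlt).2
  have hkR : (0:ℝ) < (k:ℝ) := by exact_mod_cast hk
  have hkk : (0:ℝ) < (k:ℝ)^k := by positivity
  have hfac : (0:ℝ) < (k.factorial : ℝ) := by exact_mod_cast k.factorial_pos
  set δ : ℝ := ε * (k : ℝ) ^ k / (s * k.factorial) with hδ
  have hδ0 : 0 < δ := by positivity
  have hδhalf : δ < 1/2 := by
    rw [hδ, div_lt_iff₀ (by positivity)]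
    rw [lt_div_iff₀ (by positivity)] at hεs
    nlinarith
  have hbe : binEnt δ < 1 := binEnt_lt_one (by
    intro h; rw [h] at hδhalf; norm_num at hδhalf)
  set d := V.card with hd
  -- the pattern map
  set pat : ((Fin k → Ω) → Y) → Ω → (Equiv.Perm (Fin k) → Y) := fun H t σ =>
    H (fun i => if h : ((σ i : ℕ)) < k - 1 then x ⟨(σ i : ℕ), h⟩ else t) with hpatdef
  -- trivial case d = 0
  rcases Nat.eq_zero_or_pos d with hd0 | hdpos
  · have hV0 : (V.card : ℤ) = 0 := by exact_mod_cast hd0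
    rw [hV0]
    refine Int.le_floor.mpr ?_
    push_cast
    refine div_nonneg ?_ (by linarith)
    rcases Nat.eq_zero_or_pos ⌊mHP ε⌋₊ with hM | hM
    · rw [hM]; simp
    · exact Real.logb_nonneg one_lt_two (by exact_mod_cast hM)
  -- main case
  have hdR : (0:ℝ) < (d:ℝ) := by exact_mod_cast hdpos
  have hk1lt : k - 1 < k := Nat.sub_lt hk one_pos
  -- the discrete model
  set ι := Fin k × Fin d with hι
  let enum : Fin d → Ω := fun j => (V.equivFin.symm j : Ω)
  have henum_mem : ∀ j, enum j ∈ V := fun j => (V.equivFin.symm j).2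
  let e : ι → Ω := fun p => if h : (p.1 : ℕ) < k - 1 then x ⟨p.1, h⟩ else enum p.2
  have he : Measurable e := measurable_of_countable e
  let ν : Measure ι := (((k*d : ℕ) : ℝ≥0∞))⁻¹ • Measure.count
  have hιcard : Fintype.card ι = k * d := by simp [hι]
  have hkd0 : ((k*d : ℕ) : ℝ≥0∞) ≠ 0 := by
    simp only [ne_eq, Nat.cast_eq_zero]
    positivity
  have hkdtop : ((k*d : ℕ) : ℝ≥0∞) ≠ ⊤ := ENNReal.natCast_ne_top _
  haveI hνprob : IsProbabilityMeasure ν := by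
    constructor
    simp only [ν, Measure.smul_apply, Measure.count_univ, hιcard, smul_eq_mul]
    rw [ENat.card_eq_coe_fintype_card, hιcard, ENat.toENNReal_coe]
    exact ENNReal.inv_mul_cancel hkd0 hkdtop
  have hν1 : ∀ a : ι, ν {a} = (((k*d : ℕ) : ℝ≥0∞))⁻¹ := by
    intro a
    simp [ν, Measure.count_singleton]
  set P : Measure (Fin k → ι) := Measure.pi fun _ : Fin k => ν with hP
  haveI : IsProbabilityMeasure P := by rw [hP]; infer_instance
  set μ : Measure Ω := ν.map e with hμ
  haveI hμprob : IsProbabilityMeasure μ := Measure.isProbabilityMeasure_map he.aemeasurable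
  have hPmap : (Measure.pi fun _ : Fin k => μ) = P.map (fun z i => e (z i)) :=
    pi_map_comp ν e he
  have hE : Measurable (fun (z : Fin k → ι) i => e (z i)) :=
    measurable_pi_lambda _ fun i => he.comp (measurable_pi_apply i)
  -- real weight
  set cR : ℝ := (((k:ℝ) * d)⁻¹)^k with hcR
  have hcR0 : 0 < cR := by positivity
  have hPw : ∀ w : Fin k → ι, (P {w}).toReal = cR := by
    intro w
    rw [← Set.univ_pi_singleton w, hP, Measure.pi_pi]
    simp only [hν1]
    rw [Finset.prod_const]
    simp only [Finset.card_univ, Fintype.card_fin]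
    rw [ENNReal.toReal_pow, ENNReal.toReal_inv]
    congr 2
    push_cast
    simp
  -- integral as finite sum
  have hsum : ∀ F G : (Fin k → Ω) → Y, Measurable F → Measurable G →
      (∫ z, ℓ z (fun σ => G (fun i => z (σ i))) (fun σ => F (fun i => z (σ i)))
        ∂(Measure.pi fun _ : Fin k => μ))
      = ∑ w : Fin k → ι, (P {w}).toReal •
          ℓ (fun i => e (w i)) (fun σ => G (fun i => e (w (σ i))))
            (fun σ => F (fun i => e (w (σ i)))) := by
    intro F G hF hG
    have hint' := hint μ hμprob F G hF hG
    rw [hPmap] at hint' ⊢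
    rw [integral_map hE.aemeasurable hint'.aestronglyMeasurable]
    exact integral_fintype Integrable.of_finite
  -- key estimate
  have key : ∀ F G : (Fin k → Ω) → Y, F ∈ ℋ → G ∈ ℋ →
      (∫ z, ℓ z (fun σ => G (fun i => z (σ i))) (fun σ => F (fun i => z (σ i)))
        ∂(Measure.pi fun _ : Fin k => μ)) ≤ ε →
      ∀ T : Finset Ω, T ⊆ V → (∀ t ∈ T, pat F t ≠ pat G t) →
      (T.card : ℝ) ≤ δ * d := by
    intro F G hF hG hloss T hTV hT
    set DZ : Finset (Fin k → ι) := Finset.univ.filter (fun w =>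
      (fun σ : Equiv.Perm (Fin k) => G (fun i => e (w (σ i))))
        ≠ (fun σ => F (fun i => e (w (σ i))))) with hDZ
    -- lower bound for the loss
    have hlow : (DZ.card : ℝ) * (cR * s) ≤ ε := by
      have h1 := hsum F G (hℋmeas F hF) (hℋmeas G hG)
      calc (DZ.card : ℝ) * (cR * s) = ∑ _w ∈ DZ, cR * s := by
            rw [Finset.sum_const, nsmul_eq_mul]
        _ ≤ ∑ w ∈ DZ, (P {w}).toReal •
              ℓ (fun i => e (w i)) (fun σ => G (fun i => e (w (σ i))))
                (fun σ => F (fun i => e (w (σ i)))) := by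
            refine Finset.sum_le_sum fun w hw => ?_
            rw [hPw w, smul_eq_mul]
            have hne := (Finset.mem_filter.mp hw).2
            exact mul_le_mul_of_nonneg_left (hsep _ _ _ hne) hcR0.le
        _ ≤ ∑ w : Fin k → ι, (P {w}).toReal •
              ℓ (fun i => e (w i)) (fun σ => G (fun i => e (w (σ i))))
                (fun σ => F (fun i => e (w (σ i)))) := by
            refine Finset.sum_le_sum_of_subset_of_nonneg (Finset.subset_univ _)
              fun w _ _ => ?_
            rw [hPw w, smul_eq_mul]
            exact mul_nonneg hcR0.le (hnn _ _ _)
        _ = _ := (h1).symm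
        _ ≤ ε := hloss
    -- counting lower bound
    have hnatcount : T.card * (k.factorial * d^k) ≤ d * DZ.card := by
      set φ : {t // t ∈ T} × (Equiv.Perm (Fin k)) × (Fin k → Fin d) → (Fin k → ι) :=
        fun p => fun i => (p.2.1 i,
          if ((p.2.1 i : ℕ)) = k - 1 then V.equivFin ⟨p.1.1, hTV p.1.2⟩ else p.2.2 i) with hφ
      set A : Finset ({t // t ∈ T} × (Equiv.Perm (Fin k)) × (Fin k → Fin d)) :=
        T.attach ×ˢ (Finset.univ ×ˢ Finset.univ) with hA
      have hAcard : A.card = T.card * (k.factorial * d^k) := by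
        rw [hA, Finset.card_product, Finset.card_product, Finset.card_attach]
        simp [Fintype.card_perm, Fintype.card_fun]
      -- image of φ lands in DZ
      have hew : ∀ (p : {t // t ∈ T} × (Equiv.Perm (Fin k)) × (Fin k → Fin d)) (i : Fin k),
          e (φ p i) = if h : ((p.2.1 i : ℕ)) < k - 1 then x ⟨(p.2.1 i : ℕ), h⟩ else p.1.1 := by
        intro p i
        by_cases h : ((p.2.1 i : ℕ)) < k - 1
        · simp only [hφ, e, h, if_neg (by omega : ¬ ((p.2.1 i : ℕ)) = k - 1)]
          simp [h]
        · have heq : ((p.2.1 i : ℕ)) = k - 1 := by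
            have := (p.2.1 i).2
            omega
          simp only [hφ, e, if_pos heq, dif_neg h]
          simp only [enum]
          rw [Equiv.symm_apply_apply]
      have himg : A.image φ ⊆ DZ := by
        intro z hz
        obtain ⟨p, hpA, rfl⟩ := Finset.mem_image.mp hz
        have htT : p.1.1 ∈ T := p.1.2
        have hdiff := hT p.1.1 htT
        rw [Function.ne_iff] at hdiff
        obtain ⟨σs, hσs⟩ := hdiff
        rw [hDZ, Finset.mem_filter]
        refine ⟨Finset.mem_univ _, ?_⟩
        rw [Function.ne_iff]
        refine ⟨p.2.1⁻¹ * σs, ?_⟩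
        have harg : (fun i => e (φ p ((p.2.1⁻¹ * σs) i)))
            = fun i => if h : ((σs i : ℕ)) < k - 1 then x ⟨(σs i : ℕ), h⟩ else p.1.1 := by
          funext i
          rw [hew p ((p.2.1⁻¹ * σs) i)]
          have hms : p.2.1 ((p.2.1⁻¹ * σs) i) = σs i := by
            simp [Equiv.Perm.mul_apply]
          rw [hms]
        rw [harg]
        simp only [hpatdef] at hσs
        exact Ne.symm hσs
      -- fibers of φ have size at most d
      have hfiber : ∀ z ∈ A.image φ, (A.filter fun p => φ p = z).card ≤ d := by
        intro z _
        have hcard := Finset.card_le_card_of_injOn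
          (f := fun p : {t // t ∈ T} × (Equiv.Perm (Fin k)) × (Fin k → Fin d) =>
            p.2.2 (p.2.1⁻¹ ⟨k-1, hk1lt⟩))
          (s := A.filter fun p => φ p = z) (t := (Finset.univ : Finset (Fin d)))
          (fun p _ => Finset.mem_univ _) ?_
        · simpa using hcard
        · intro p hp p' hp' hψ
          simp only [Finset.coe_filter, Set.mem_setOf_eq] at hp hp'
          have hφeq : φ p = φ p' := hp.2.trans hp'.2.symm
          have hσ : p.2.1 = p'.2.1 := by
            apply Equiv.ext
            intro i
            exact ((Prod.ext_iff).mp (congrFun hφeq i)).1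
          set i0 : Fin k := p.2.1⁻¹ ⟨k-1, hk1lt⟩ with hi0
          have hσi0 : p.2.1 i0 = ⟨k-1, hk1lt⟩ := p.2.1.apply_symm_apply _
          have hvi0 : ((p.2.1 i0 : ℕ)) = k - 1 := by rw [hσi0]
          have hsnd0 := ((Prod.ext_iff).mp (congrFun hφeq i0)).2
          simp only [hφ, if_pos hvi0, ← hσ, if_pos hvi0] at hsnd0
          have ht : p.1 = p'.1 := by
            have := V.equivFin.injective hsnd0
            exact Subtype.ext (Subtype.mk_eq_mk.mp this)
          have hj : p.2.2 = p'.2.2 := by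
            funext i
            by_cases hcase : ((p.2.1 i : ℕ)) = k - 1
            · have : p.2.1 i = p.2.1 i0 := by
                rw [hσi0]; exact Fin.ext hcase
              have hii0 : i = i0 := p.2.1.injective this
              rw [hii0]
              simpa [hi0, hσ] using hψ
            · have hsnd := ((Prod.ext_iff).mp (congrFun hφeq i)).2
              simpa only [hφ, if_neg hcase, ← hσ] using hsnd
          exact Prod.ext ht (Prod.ext hσ hj)
      have himgcard : (A.image φ).card ≤ DZ.card := Finset.card_le_card himg
      calc T.card * (k.factorial * d^k) = A.card := hAcard.symm
        _ ≤ d * (A.image φ).card := Finset.card_le_mul_card_image A d hfiber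
        _ ≤ d * DZ.card := Nat.mul_le_mul_left d himgcard
    -- combine the two bounds
    have hKD' : (k:ℝ)^k * (d:ℝ)^k = ((k:ℝ)*d)^k := (mul_pow _ _ _).symm
    have hKD : (0:ℝ) < (k:ℝ)^k * (d:ℝ)^k := mul_pos hkk (pow_pos hdR k)
    have hcRKD : cR * ((k:ℝ)^k * (d:ℝ)^k) = 1 := by
      rw [hKD', hcR, ← mul_pow, inv_mul_cancel₀ (ne_of_gt (mul_pos hkR hdR)), one_pow]
    have hDZs : (DZ.card : ℝ) * s ≤ ε * ((k:ℝ)^k * (d:ℝ)^k) := by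
      calc (DZ.card:ℝ) * s
          = (DZ.card:ℝ) * (cR * s) * ((k:ℝ)^k * (d:ℝ)^k) := by
            rw [show (DZ.card:ℝ) * (cR*s) * ((k:ℝ)^k * (d:ℝ)^k)
              = (DZ.card:ℝ) * s * (cR*((k:ℝ)^k * (d:ℝ)^k)) from by ring, hcRKD, mul_one]
        _ ≤ ε * ((k:ℝ)^k * (d:ℝ)^k) := mul_le_mul_of_nonneg_right hlow hKD.le
    have hcount : (T.card:ℝ) * ((k.factorial:ℝ) * (d:ℝ)^k) ≤ (d:ℝ) * DZ.card := by
      exact_mod_cast hnatcount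
    have hfinal : (T.card:ℝ) * ((k.factorial:ℝ) * s) * (d:ℝ)^k
        ≤ ε * (k:ℝ)^k * (d:ℝ) * (d:ℝ)^k := by
      calc (T.card:ℝ) * ((k.factorial:ℝ) * s) * (d:ℝ)^k
          = ((T.card:ℝ) * ((k.factorial:ℝ) * (d:ℝ)^k)) * s := by ring
        _ ≤ ((d:ℝ) * DZ.card) * s := mul_le_mul_of_nonneg_right hcount hs.le
        _ = (d:ℝ) * ((DZ.card:ℝ) * s) := by ring
        _ ≤ (d:ℝ) * (ε * ((k:ℝ)^k * (d:ℝ)^k)) := mul_le_mul_of_nonneg_left hDZs hdR.le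
        _ = ε * (k:ℝ)^k * (d:ℝ) * (d:ℝ)^k := by ring
    have hDk : (0:ℝ) < (d:ℝ)^k := pow_pos hdR k
    have h9 : (T.card:ℝ) * ((k.factorial:ℝ) * s) ≤ ε * (k:ℝ)^k * (d:ℝ) :=
      le_of_mul_le_mul_right hfinal hDk
    rw [hδ, div_mul_eq_mul_div, le_div_iff₀ (mul_pos hs hfac)]
    linarith [h9]
  -- pigeonhole over the packing family
  obtain ⟨ℋ', hsub, hcard, hnear⟩ := hHP ε hε0 hε1 μ hμprob
  obtain ⟨g0, hg0, -⟩ := hUex ∅ (Finset.empty_subset V)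
  obtain ⟨H0, hH0, -⟩ := hg0
  obtain ⟨G0, hG0, -⟩ := hnear H0 hH0
  have hch : ∀ U : Finset Ω, ∃ FG : ((Fin k → Ω) → Y) × ((Fin k → Ω) → Y),
      U ⊆ V → FG.1 ∈ ℋ ∧ FG.2 ∈ ℋ' ∧
        (∀ a ∈ V, pat FG.1 a = if a ∈ U then f₁ a else f₀ a) ∧
        (∫ z, ℓ z (fun σ => FG.2 (fun i => z (σ i))) (fun σ => FG.1 (fun i => z (σ i)))
            ∂(Measure.pi fun _ : Fin k => μ)) ≤ ε := by
    intro U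
    by_cases hUV : U ⊆ V
    · obtain ⟨g, hg, hgU⟩ := hUex U hUV
      obtain ⟨H, hH, hgeq⟩ := hg
      obtain ⟨G, hG, hloss⟩ := hnear H hH
      refine ⟨(H, G), fun _ => ⟨hH, hG, ?_, hloss⟩⟩
      intro a ha
      have hpg : pat H = g := by rw [hgeq, hpatdef]
      rw [hpg]
      exact hgU a ha
    · exact ⟨(H0, G0), fun h => absurd h hUV⟩
  choose FG hFG using hch
  set m := ⌊δ * (d:ℝ)⌋₊ with hmdef
  set B := ∑ j ∈ Finset.range (m+1), d.choose j with hBdef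
  have hfib : ∀ Gf ∈ ℋ', (V.powerset.filter fun U => (FG U).2 = Gf).card ≤ B := by
    intro Gf hGf
    set W : Finset Ω := V.filter (fun t => pat Gf t = f₁ t) with hW
    have hmaps : ∀ U ∈ V.powerset.filter (fun U => (FG U).2 = Gf),
        U ∆ W ∈ V.powerset.filter fun Wd => Wd.card ≤ m := by
      intro U hU
      rw [Finset.mem_filter, Finset.mem_powerset] at hU
      obtain ⟨hUV, hUG⟩ := hU
      obtain ⟨hF1, hG1, hpatU, hlossU⟩ := hFG U hUV
      set T : Finset Ω := V.filter (fun t => pat ((FG U).1) t ≠ pat Gf t) with hT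
      have hTbound : (T.card : ℝ) ≤ δ * d := by
        refine key ((FG U).1) Gf hF1 (hsub hGf) ?_ T (Finset.filter_subset _ _) ?_
        · rw [← hUG]
          exact hlossU
        · intro t ht
          exact (Finset.mem_filter.mp ht).2
      have hsubT : U ∆ W ⊆ T := by
        intro t ht
        rw [Finset.mem_symmDiff] at ht
        rw [hT, Finset.mem_filter]
        rcases ht with ⟨htU, htW⟩ | ⟨htW, htU⟩
        · have htV : t ∈ V := hUV htU
          refine ⟨htV, ?_⟩
          rw [hpatU t htV, if_pos htU]
          intro hcon
          exact htW (Finset.mem_filter.mpr ⟨htV, hcon.symm⟩)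
        · have htV : t ∈ V := (Finset.filter_subset _ _) htW
          refine ⟨htV, ?_⟩
          rw [hpatU t htV, if_neg htU]
          have hfW := (Finset.mem_filter.mp htW).2
          rw [hfW]
          exact hf01 t htV
      rw [Finset.mem_filter, Finset.mem_powerset]
      constructor
      · intro t ht
        rcases Finset.mem_symmDiff.mp ht with ⟨h1, -⟩ | ⟨h1, -⟩
        exacts [hUV h1, (Finset.filter_subset _ _) h1]
      · have hle := Finset.card_le_card hsubT
        have h2 : (((U ∆ W).card : ℕ) : ℝ) ≤ δ * d :=
          le_trans (by exact_mod_cast hle) hTbound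
        exact Nat.le_floor h2
    have hinj : Set.InjOn (fun U => U ∆ W)
        (V.powerset.filter fun U => (FG U).2 = Gf) := by
      intro U1 _ U2 _ h
      have h2 := congrArg (fun Z => Z ∆ W) h
      simpa [symmDiff_symmDiff_cancel_right] using h2
    refine le_trans (Finset.card_le_card_of_injOn _ hmaps hinj) ?_
    have hdecomp : (V.powerset.filter fun Wd => Wd.card ≤ m)
        = (Finset.range (m+1)).biUnion (fun j => V.powersetCard j) := by
      ext W'
      simp only [Finset.mem_filter, Finset.mem_powerset, Finset.mem_biUnion,
        Finset.mem_range, Finset.mem_powersetCard, Nat.lt_succ_iff]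
      constructor
      · rintro ⟨h1, h2⟩
        exact ⟨W'.card, h2, h1, rfl⟩
      · rintro ⟨j, hj, h1, h2⟩
        exact ⟨h1, h2 ▸ hj⟩
    rw [hdecomp, hBdef]
    refine le_trans Finset.card_biUnion_le ?_
    exact le_of_eq (Finset.sum_congr rfl fun j _ => Finset.card_powersetCard j V)
  have hcount2 : 2^d ≤ ℋ'.card * B := by
    have hfibers := Finset.card_eq_sum_card_fiberwise
      (f := fun U => (FG U).2) (s := V.powerset) (t := ℋ')
      (fun U hU => ((hFG U (Finset.mem_powerset.mp hU)).2.1))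
    rw [Finset.card_powerset] at hfibers
    calc 2^d = ∑ Gf ∈ ℋ', (V.powerset.filter fun U => (FG U).2 = Gf).card := hfibers
      _ ≤ ∑ _Gf ∈ ℋ', B := Finset.sum_le_sum hfib
      _ = ℋ'.card * B := by rw [Finset.sum_const, smul_eq_mul]
  set M := ⌊mHP ε⌋₊ with hMdef
  have hMle : ℋ'.card ≤ M := Nat.le_floor hcard
  have hBle : (B:ℝ) ≤ 2 ^ ((d:ℝ) * binEnt δ) := by
    rw [hBdef]
    push_cast
    exact sum_choose_le_rpow_binEnt d m hδ0 hδhalf (Nat.floor_le (mul_nonneg hδ0.le hdR.le))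
  have hreal : (2:ℝ) ^ ((d:ℝ)) ≤ (M:ℝ) * 2 ^ ((d:ℝ) * binEnt δ) := by
    calc (2:ℝ)^((d:ℝ)) = ((2^d : ℕ):ℝ) := by
          rw [Real.rpow_natCast]; push_cast; ring
      _ ≤ ((ℋ'.card * B : ℕ):ℝ) := by exact_mod_cast hcount2
      _ = (ℋ'.card:ℝ) * (B:ℝ) := by push_cast; ring
      _ ≤ (M:ℝ) * 2 ^ ((d:ℝ)*binEnt δ) :=
          mul_le_mul (by exact_mod_cast hMle) hBle (Nat.cast_nonneg B) (Nat.cast_nonneg M)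
  have hM0 : (0:ℝ) < (M:ℝ) := by
    by_contra hcon
    push_neg at hcon
    have hM00 : (M:ℝ) = 0 := le_antisymm hcon (Nat.cast_nonneg M)
    rw [hM00, zero_mul] at hreal
    exact absurd hreal (not_le.mpr (Real.rpow_pos_of_pos two_pos _))
  have hlogb : (d:ℝ) * (1 - binEnt δ) ≤ Real.logb 2 (M:ℝ) := by
    have h1 : Real.logb 2 ((2:ℝ)^((d:ℝ))) ≤ Real.logb 2 ((M:ℝ) * 2 ^ ((d:ℝ)*binEnt δ)) :=
      Real.logb_le_logb_of_le one_lt_two (Real.rpow_pos_of_pos two_pos _) hreal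
    rw [Real.logb_rpow two_pos (by norm_num),
      Real.logb_mul (ne_of_gt hM0) (ne_of_gt (Real.rpow_pos_of_pos two_pos _)),
      Real.logb_rpow two_pos (by norm_num)] at h1
    linarith
  have hfinal : ((d:ℝ)) ≤ Real.logb 2 (M:ℝ) / (1 - binEnt δ) := by
    rw [le_div_iff₀ (by linarith)]
    linarith
  exact Int.le_floor.mpr (by push_cast; exact hfinal)
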